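/- Let u_h, v_h be two fixed points of the Hopf–Lax update operator Λ_h with boundary data g, g' respectively on the same triangulation. If g ≤ g' on the boundary nodes, then u_h ≤ v_h at all nodes (monotonicity/comparison principle for the discrete scheme). -/

import Mathlib

open Set

/-- The Hopf–Lax update operator on a triangulation with node type `ι`. Each interior
node `z` has a patch whose boundary is the union of the segments `[pos e.1, pos e.2]`
for `e ∈ Edges z`; a piecewise linear function takes the value `(1−t)u(e.1) + t·u(e.2)`
at the point `(1−t)•pos e.1 + t•pos e.2` of such a segment. On boundary nodes the
update returns the boundary data `g`. -/
noncomputable def HLupdate {ι : Type*}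
    (f : EuclideanSpace ℝ (Fin 2) → EuclideanSpace ℝ (Fin 2) → ℝ)
    (pos : ι → EuclideanSpace ℝ (Fin 2)) (Edges : ι → Finset (ι × ι))
    (interior : Set ι) [DecidablePred (· ∈ interior)]
    (g : ι → ℝ) (u : ι → ℝ) (z : ι) : ℝ :=
  if z ∈ interior then
    sInf {c | ∃ e ∈ Edges z, ∃ t ∈ Set.Icc (0 : ℝ) 1,
      c = (1 - t) * u e.1 + t * u e.2 +
        ‖pos z - ((1 - t) • pos e.1 + t • pos e.2)‖ /
          f (pos z) (‖pos z - ((1 - t) • pos e.1 + t • pos e.2)‖⁻¹ •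
            (pos z - ((1 - t) • pos e.1 + t • pos e.2)))}
  else g z

/-- Auxiliary: the "travel time" term of the Hopf–Lax update. -/
noncomputable def HLdist {ι : Type*}
    (f : EuclideanSpace ℝ (Fin 2) → EuclideanSpace ℝ (Fin 2) → ℝ)
    (pos : ι → EuclideanSpace ℝ (Fin 2)) (z : ι) (e : ι × ι) (t : ℝ) : ℝ :=
  ‖pos z - ((1 - t) • pos e.1 + t • pos e.2)‖ /
    f (pos z) (‖pos z - ((1 - t) • pos e.1 + t • pos e.2)‖⁻¹ •
      (pos z - ((1 - t) • pos e.1 + t • pos e.2)))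

lemma HLdist_pos {ι : Type*}
    (f : EuclideanSpace ℝ (Fin 2) → EuclideanSpace ℝ (Fin 2) → ℝ)
    (hfpos : ∀ x p, 0 < f x p)
    (pos : ι → EuclideanSpace ℝ (Fin 2)) (z : ι) (e : ι × ι) (t : ℝ)
    (h : pos z ≠ (1 - t) • pos e.1 + t • pos e.2) :
    0 < HLdist f pos z e t := by
  have h0 : pos z - ((1 - t) • pos e.1 + t • pos e.2) ≠ 0 := sub_ne_zero.mpr h
  exact div_pos (norm_pos_iff.mpr h0) (hfpos _ _)

lemma HLupdate_interior {ι : Type*}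
    (f : EuclideanSpace ℝ (Fin 2) → EuclideanSpace ℝ (Fin 2) → ℝ)
    (pos : ι → EuclideanSpace ℝ (Fin 2)) (Edges : ι → Finset (ι × ι))
    (interior : Set ι) [DecidablePred (· ∈ interior)]
    (g w : ι → ℝ) (z : ι) (hz : z ∈ interior) :
    HLupdate f pos Edges interior g w z =
      sInf {c | ∃ e ∈ Edges z, ∃ t ∈ Set.Icc (0 : ℝ) 1,
        c = (1 - t) * w e.1 + t * w e.2 + HLdist f pos z e t} := by
  rw [HLupdate, if_pos hz]; rfl

lemma HLset_eq {ι : Type*}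
    (f : EuclideanSpace ℝ (Fin 2) → EuclideanSpace ℝ (Fin 2) → ℝ)
    (pos : ι → EuclideanSpace ℝ (Fin 2)) (Edges : ι → Finset (ι × ι))
    (w : ι → ℝ) (z : ι) :
    {c | ∃ e ∈ Edges z, ∃ t ∈ Set.Icc (0 : ℝ) 1,
        c = (1 - t) * w e.1 + t * w e.2 + HLdist f pos z e t} =
      ⋃ e ∈ (Edges z : Set (ι × ι)),
        (fun t => (1 - t) * w e.1 + t * w e.2 + HLdist f pos z e t) '' Set.Icc 0 1 := by
  ext c
  simp only [Set.mem_setOf_eq, Set.mem_iUnion, Set.mem_image, Finset.mem_coe]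
  constructor
  · rintro ⟨e, he, t, ht, rfl⟩; exact ⟨e, he, t, ht, rfl⟩
  · rintro ⟨e, he, t, ht, rfl⟩; exact ⟨e, he, t, ht, rfl⟩

lemma HLset_compact {ι : Type*}
    (f : EuclideanSpace ℝ (Fin 2) → EuclideanSpace ℝ (Fin 2) → ℝ)
    (hfpos : ∀ x p, 0 < f x p) (hfcont : Continuous fun q : _ × _ => f q.1 q.2)
    (pos : ι → EuclideanSpace ℝ (Fin 2)) (Edges : ι → Finset (ι × ι))
    (w : ι → ℝ) (z : ι)
    (hsep : ∀ e ∈ Edges z, ∀ t ∈ Set.Icc (0 : ℝ) 1,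
      pos z ≠ (1 - t) • pos e.1 + t • pos e.2) :
    IsCompact {c | ∃ e ∈ Edges z, ∃ t ∈ Set.Icc (0 : ℝ) 1,
        c = (1 - t) * w e.1 + t * w e.2 + HLdist f pos z e t} := by
  rw [HLset_eq]
  refine (Edges z).finite_toSet.isCompact_biUnion ?_
  intro e he
  refine isCompact_Icc.image_of_continuousOn ?_
  set r : ℝ → EuclideanSpace ℝ (Fin 2) :=
    fun t => pos z - ((1 - t) • pos e.1 + t • pos e.2) with hr_def
  have hr : Continuous r := by
    apply continuous_const.sub
    exact ((continuous_const.sub continuous_id).smul continuous_const).add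
      (continuous_id.smul continuous_const)
  have hrne : ∀ t ∈ Set.Icc (0 : ℝ) 1, r t ≠ 0 := fun t ht =>
    sub_ne_zero.mpr (hsep e he t ht)
  have hnormne : ∀ t ∈ Set.Icc (0 : ℝ) 1, ‖r t‖ ≠ 0 := fun t ht =>
    norm_ne_zero_iff.mpr (hrne t ht)
  have hdir : ContinuousOn (fun t => ‖r t‖⁻¹ • r t) (Set.Icc (0 : ℝ) 1) :=
    ((hr.norm.continuousOn).inv₀ hnormne).smul hr.continuousOn
  have hf : ContinuousOn (fun t => f (pos z) (‖r t‖⁻¹ • r t)) (Set.Icc (0 : ℝ) 1) :=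
    hfcont.comp_continuousOn (continuousOn_const.prodMk hdir)
  have hD : ContinuousOn (fun t => HLdist f pos z e t) (Set.Icc (0 : ℝ) 1) := by
    refine (hr.norm.continuousOn.div hf ?_)
    exact fun t ht => (hfpos _ _).ne'
  exact ((continuous_const.sub continuous_id).mul continuous_const).continuousOn.add
    ((continuous_id.mul continuous_const).continuousOn) |>.add hD

lemma HLset_nonempty {ι : Type*}
    (f : EuclideanSpace ℝ (Fin 2) → EuclideanSpace ℝ (Fin 2) → ℝ)
    (pos : ι → EuclideanSpace ℝ (Fin 2)) (Edges : ι → Finset (ι × ι))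
    (w : ι → ℝ) (z : ι) (hE : (Edges z).Nonempty) :
    {c | ∃ e ∈ Edges z, ∃ t ∈ Set.Icc (0 : ℝ) 1,
        c = (1 - t) * w e.1 + t * w e.2 + HLdist f pos z e t}.Nonempty := by
  obtain ⟨e, he⟩ := hE
  exact ⟨_, e, he, 0, ⟨le_refl _, zero_le_one⟩, rfl⟩

/-- comparison principle for the discrete Hopf–Lax scheme: if `u, v` are
fixed points of `Λ_h` with boundary data `g ≤ g'` respectively, then `u ≤ v` at all
nodes. -/
theorem hopf_lax_comparison {ι : Type*} [Fintype ι]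
    (f : EuclideanSpace ℝ (Fin 2) → EuclideanSpace ℝ (Fin 2) → ℝ)
    (hfpos : ∀ x p, 0 < f x p) (hfcont : Continuous fun q : _ × _ => f q.1 q.2)
    (pos : ι → EuclideanSpace ℝ (Fin 2)) (Edges : ι → Finset (ι × ι))
    (interior : Set ι) [DecidablePred (· ∈ interior)]
    (hEdges : ∀ z ∈ interior, (Edges z).Nonempty)
    (hsep : ∀ z ∈ interior, ∀ e ∈ Edges z, ∀ t ∈ Set.Icc (0 : ℝ) 1,
      pos z ≠ (1 - t) • pos e.1 + t • pos e.2)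
    (g g' : ι → ℝ) (hg : ∀ z, g z ≤ g' z)
    (u v : ι → ℝ)
    (hu : HLupdate f pos Edges interior g u = u)
    (hv : HLupdate f pos Edges interior g' v = v) :
    ∀ z, u z ≤ v z := by
  by_contra hcon
  push_neg at hcon
  obtain ⟨z0, hz0⟩ := hcon
  have hne : Nonempty ι := ⟨z0⟩
  have hune : (Finset.univ : Finset ι).Nonempty := Finset.univ_nonempty
  set F : ι → ℝ := fun z => u z - v z with hF
  set M : ℝ := Finset.univ.sup' hune F with hM
  have hFM : ∀ z, F z ≤ M := fun z => Finset.le_sup' F (Finset.mem_univ z)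
  have hMpos : 0 < M := lt_of_lt_of_le (by simp [hF]; linarith) (hFM z0)
  -- the set of maximizers of F
  set S : Finset ι := Finset.univ.filter (fun z => F z = M) with hS
  have hSne : S.Nonempty := by
    obtain ⟨z, _, hz⟩ := Finset.exists_mem_eq_sup' hune F
    exact ⟨z, Finset.mem_filter.mpr ⟨Finset.mem_univ z, hz.symm⟩⟩
  -- pick a maximizer with minimal v
  obtain ⟨z, hzS, hzmin⟩ := S.exists_min_image v hSne
  have hzF : F z = M := (Finset.mem_filter.mp hzS).2
  -- z must be interior
  have hzint : z ∈ interior := by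
    by_contra hzb
    have hu' : u z = g z := by rw [← hu, HLupdate, if_neg hzb]
    have hv' : v z = g' z := by rw [← hv, HLupdate, if_neg hzb]
    have : F z ≤ 0 := by simp [hF, hu', hv']; exact hg z
    linarith
  -- the minimum for v is attained
  have hcpt := HLset_compact f hfpos hfcont pos Edges v z (hsep z hzint)
  have hnem := HLset_nonempty f pos Edges v z (hEdges z hzint)
  have hvz : v z = sInf {c | ∃ e ∈ Edges z, ∃ t ∈ Set.Icc (0 : ℝ) 1,
      c = (1 - t) * v e.1 + t * v e.2 + HLdist f pos z e t} := by
    rw [← HLupdate_interior f pos Edges interior g' v z hzint, hv]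
  have hmem := hcpt.sInf_mem hnem
  rw [← hvz] at hmem
  obtain ⟨e, he, t, ht, hvzeq⟩ := hmem
  -- u z is at most the corresponding value for u
  have huz : u z ≤ (1 - t) * u e.1 + t * u e.2 + HLdist f pos z e t := by
    have hbdd : BddBelow {c | ∃ e ∈ Edges z, ∃ t ∈ Set.Icc (0 : ℝ) 1,
        c = (1 - t) * u e.1 + t * u e.2 + HLdist f pos z e t} :=
      (HLset_compact f hfpos hfcont pos Edges u z (hsep z hzint)).bddBelow
    have huz' : u z = sInf {c | ∃ e ∈ Edges z, ∃ t ∈ Set.Icc (0 : ℝ) 1,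
        c = (1 - t) * u e.1 + t * u e.2 + HLdist f pos z e t} := by
      rw [← HLupdate_interior f pos Edges interior g u z hzint, hu]
    rw [huz']
    exact csInf_le hbdd ⟨e, he, t, ht, rfl⟩
  have hD : 0 < HLdist f pos z e t := HLdist_pos f hfpos pos z e t (hsep z hzint e he t ht)
  obtain ⟨ht0, ht1⟩ := ht
  have ha : (0:ℝ) ≤ 1 - t := by linarith
  -- F z ≤ (1-t) F e.1 + t F e.2
  have hkey : M ≤ (1 - t) * F e.1 + t * F e.2 := by
    have : F z ≤ (1 - t) * (u e.1 - v e.1) + t * (u e.2 - v e.2) := by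
      simp only [hF]; nlinarith [hvzeq, huz]
    rw [hzF] at this; simpa [hF] using this
  have hF1 : F e.1 ≤ M := hFM e.1
  have hF2 : F e.2 ≤ M := hFM e.2
  -- positive-weight nodes are maximizers
  have hmax1 : 0 < 1 - t → F e.1 = M := by
    intro h; nlinarith
  have hmax2 : 0 < t → F e.2 = M := by
    intro h; nlinarith
  -- minimality of v z among maximizers
  have hmin : ∀ w, F w = M → v z ≤ v w := by
    intro w hw
    exact hzmin w (Finset.mem_filter.mpr ⟨Finset.mem_univ w, hw⟩)
  -- but (1-t) v e.1 + t v e.2 = v z - D < v z, contradiction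
  have h1 : (1 - t) * v z ≤ (1 - t) * v e.1 := by
    rcases eq_or_lt_of_le ha with h | h
    · rw [← h]; simp
    · exact mul_le_mul_of_nonneg_left (hmin e.1 (hmax1 h)) ha
  have h2 : t * v z ≤ t * v e.2 := by
    rcases eq_or_lt_of_le ht0 with h | h
    · rw [← h]; simp
    · exact mul_le_mul_of_nonneg_left (hmin e.2 (hmax2 h)) ht0
  nlinarith [hvzeq, h1, h2]
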